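/- Let |Ψ₀⟩ be a π-LME state, i.e., |Ψ₀⟩ = 2^{-n/2} Σ_x (-1)^{b_x} |x⟩ with b_x ∈ {0,1}, and let S_j = σ₁^{(j)} ⊗ U_j (acting as σ₁ on qubit j and a diagonal unitary U_j on the rest) be a generalized stabilizer generator with S_j|Ψ_i⟩ = (-1)^{i_j}|Ψ_i⟩ where |Ψ_i⟩ = σ₃^{i}|Ψ₀⟩. Then for any computational basis string k ∈ {0,1}^{n-1} on the qubits other than j and any |l⟩ ∈ {|+⟩, |−⟩} on qubit j such that ⟨l, k|Ψ_i⟩ ≠ 0, it holds that ⟨Ψ_i| S_j |Ψ_i⟩ = ⟨l, k| S_j |l, k⟩. -/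

import Mathlib

open Matrix Complex

noncomputable section

def σ : Fin 4 → Matrix (Fin 2) (Fin 2) ℂ
  | 0 => 1
  | 1 => !![0, 1; 1, 0]
  | 2 => !![0, -Complex.I; Complex.I, 0]
  | 3 => !![1, 0; 0, -1]

def pauliString (n : ℕ) (j : Fin n → Fin 4) :
    Matrix (Fin n → Fin 2) (Fin n → Fin 2) ℂ :=
  Matrix.of fun x y => ∏ i, σ (j i) (x i) (y i)

/-- `σ₃^{i}` for a bitstring `i`. -/
def sigma3Str (n : ℕ) (i : Fin n → Fin 2) : Matrix (Fin n → Fin 2) (Fin n → Fin 2) ℂ :=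
  pauliString n fun k => if i k = 1 then 3 else 0

/-- The product vector `|l, k⟩` with `|l⟩ ∈ {|+⟩, |−⟩}` (sign `ε ∈ {1,-1}`) in slot `j`
and computational basis bits `k` (recorded by a function `k' : Fin n → Fin 2` whose value
at `j` is irrelevant) elsewhere. -/
def prodVec (n : ℕ) (j : Fin n) (ε : ℂ) (k' : Fin n → Fin 2) : (Fin n → Fin 2) → ℂ :=
  fun x => if ∀ i, i ≠ j → x i = k' i then (Real.sqrt 2 : ℂ)⁻¹ * ε ^ (x j : ℕ) else 0

private lemma fin2cases (a : Fin 2) : a = 0 ∨ a = 1 := by omega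

private lemma sq2C : ((Real.sqrt 2 : ℝ) : ℂ) ^ 2 = 2 := by
  norm_cast
  rw [Real.sq_sqrt] <;> norm_num

private lemma starc : star ((Real.sqrt 2 : ℝ) : ℂ)⁻¹ = ((Real.sqrt 2 : ℝ) : ℂ)⁻¹ := by
  rw [← Complex.ofReal_inv]
  exact Complex.conj_ofReal _

private lemma cne : ((Real.sqrt 2 : ℝ) : ℂ)⁻¹ ≠ 0 := by
  have : Real.sqrt 2 ≠ 0 := by positivity
  simp [this]

/-- Lemma 1: for a π-LME state `|Ψ₀⟩`, a generalized stabilizer generator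
`S_j = σ₁^{(j)} ⊗ U_j` (σ₁ on qubit `j`, diagonal on the rest), Hermitian and unitary,
with `|Ψ_i⟩ = σ₃^{i}|Ψ₀⟩` an eigenvector of `S_j` with eigenvalue `±1`, and any product
vector `|l, k⟩` (`|l⟩ ∈ {|+⟩,|−⟩}`) with `⟨l,k|Ψ_i⟩ ≠ 0`, one has
`⟨Ψ_i|S_j|Ψ_i⟩ = ⟨l,k|S_j|l,k⟩`. -/
theorem expectation_value_from_product_vector (n : ℕ) (j : Fin n)
    (Ψ₀ : (Fin n → Fin 2) → ℂ) (b : (Fin n → Fin 2) → Bool)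
    (hπLME : ∀ x, Ψ₀ x = (if b x then -1 else 1) * (Real.sqrt 2 : ℂ)⁻¹ ^ n)
    (S : Matrix (Fin n → Fin 2) (Fin n → Fin 2) ℂ)
    (u : (Fin n → Fin 2) → ℂ)
    (hu : ∀ y y', (∀ i, i ≠ j → y i = y' i) → u y = u y')
    (hS : ∀ x y, S x y =
      if (∀ i, i ≠ j → x i = y i) ∧ x j ≠ y j then u y else 0)
    (hherm : Sᴴ = S) (hunit : S ∈ Matrix.unitaryGroup (Fin n → Fin 2) ℂ)
    (i : Fin n → Fin 2) (ε : ℂ) (hε : ε = 1 ∨ ε = -1)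
    (heig : S.mulVec ((sigma3Str n i).mulVec Ψ₀) = ε • (sigma3Str n i).mulVec Ψ₀)
    (εl : ℂ) (hεl : εl = 1 ∨ εl = -1) (k' : Fin n → Fin 2)
    (hoverlap : star (prodVec n j εl k') ⬝ᵥ (sigma3Str n i).mulVec Ψ₀ ≠ 0) :
    star ((sigma3Str n i).mulVec Ψ₀) ⬝ᵥ S.mulVec ((sigma3Str n i).mulVec Ψ₀) =
      star (prodVec n j εl k') ⬝ᵥ S.mulVec (prodVec n j εl k') := by
  classical
  set c : ℂ := (Real.sqrt 2 : ℂ)⁻¹ with hc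
  have hc2 : c ^ 2 = 2⁻¹ := by rw [hc, inv_pow, sq2C]
  have hcc : c * c = 2⁻¹ := by rw [← hc2]; ring
  set Ψ : (Fin n → Fin 2) → ℂ := (sigma3Str n i).mulVec Ψ₀ with hΨ
  -- diagonality of sigma3Str
  have hdiag : ∀ x y : Fin n → Fin 2, x ≠ y → sigma3Str n i x y = 0 := by
    intro x y hxy
    obtain ⟨k, hk⟩ := Function.ne_iff.mp hxy
    unfold sigma3Str pauliString
    simp only [Matrix.of_apply]
    apply Finset.prod_eq_zero (Finset.mem_univ k)
    rcases fin2cases (x k) with h1 | h1 <;> rcases fin2cases (y k) with h2 | h2 <;>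
      first
        | exact absurd (h1.trans h2.symm) hk
        | (by_cases h : i k = 1 <;> simp [σ, h, h1, h2, Matrix.one_apply])
  have hdiagpm : ∀ x, sigma3Str n i x x = 1 ∨ sigma3Str n i x x = -1 := by
    intro x
    unfold sigma3Str pauliString
    simp only [Matrix.of_apply]
    refine Finset.prod_induction _ (fun t => t = 1 ∨ t = -1) ?_ (Or.inl rfl) ?_
    · rintro a b (ha | ha) (hb | hb) <;> simp [ha, hb]
    · intro k _
      by_cases h : i k = 1 <;> rcases fin2cases (x k) with h1 | h1 <;>
        simp [σ, h, h1, Matrix.one_apply]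
  have hpsival : ∀ x, Ψ x = sigma3Str n i x x * Ψ₀ x := by
    intro x
    rw [hΨ, Matrix.mulVec, dotProduct]
    exact Finset.sum_eq_single x
      (fun y _ hy => by rw [hdiag x y (Ne.symm hy), zero_mul]) (by simp)
  have hpsi : ∀ x, Ψ x = c ^ n ∨ Ψ x = -(c ^ n) := by
    intro x
    rw [hpsival x, hπLME x]
    rcases hdiagpm x with h | h <;> by_cases hb : b x <;> simp [h, hb, hc]
  -- the flip map
  set fl : (Fin n → Fin 2) → (Fin n → Fin 2) :=
    fun x => Function.update x j (if x j = 0 then 1 else 0) with hfl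
  have hS' : ∀ x y, S x y = if y = fl x then u y else 0 := by
    intro x y
    rw [hS]
    by_cases h : y = fl x
    · subst h
      rw [if_pos, if_pos rfl]
      constructor
      · intro i' hi'
        simp [hfl, Function.update_of_ne hi']
      · simp only [hfl, Function.update_self]
        rcases fin2cases (x j) with h1 | h1 <;> simp [h1]
    · rw [if_neg h, if_neg]
      rintro ⟨h1, h2⟩
      apply h
      funext i'
      by_cases hi' : i' = j
      · subst hi'
        simp only [hfl, Function.update_self]
        rcases fin2cases (x i') with hx | hx <;> rcases fin2cases (y i') with hy | hy <;>
          simp_all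
      · rw [hfl]
        simp only [Function.update_of_ne hi']
        exact (h1 i' hi').symm
  have hSmul : ∀ (v : (Fin n → Fin 2) → ℂ) x, S.mulVec v x = u (fl x) * v (fl x) := by
    intro v x
    rw [Matrix.mulVec, dotProduct]
    rw [Finset.sum_congr rfl (fun y _ => by rw [hS' x y, ite_mul, zero_mul])]
    rw [Finset.sum_ite_eq' Finset.univ (fl x) (fun y => u y * v y)]
    simp
  set x0 : Fin n → Fin 2 := Function.update k' j 0 with hx0
  set x1 : Fin n → Fin 2 := Function.update k' j 1 with hx1
  have hx01 : x0 ≠ x1 := by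
    intro h
    have := congrFun h j
    simp [hx0, hx1] at this
  have hfl0 : fl x0 = x1 := by
    simp only [hfl, hx0, hx1, Function.update_self]
    simp [Function.update_idem]
  have hfl1 : fl x1 = x0 := by
    simp only [hfl, hx0, hx1, Function.update_self]
    simp [Function.update_idem]
  -- prodVec values
  have hv0 : prodVec n j εl k' x0 = c := by
    rw [prodVec, if_pos]
    · simp [hx0, hc]
    · intro i' hi'; simp [hx0, Function.update_of_ne hi']
  have hv1 : prodVec n j εl k' x1 = c * εl := by
    rw [prodVec, if_pos]
    · simp [hx1, hc]
    · intro i' hi'; simp [hx1, Function.update_of_ne hi']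
  have hvz : ∀ x, x ≠ x0 → x ≠ x1 → prodVec n j εl k' x = 0 := by
    intro x h0 h1
    rw [prodVec, if_neg]
    intro h
    have hx : x = Function.update k' j (x j) := by
      funext i'
      by_cases hi' : i' = j
      · subst hi'; simp
      · simp [Function.update_of_ne hi', h i' hi']
    rcases fin2cases (x j) with hj | hj <;> rw [hj] at hx
    · exact h0 hx
    · exact h1 hx
  have hdot : ∀ w : (Fin n → Fin 2) → ℂ, star (prodVec n j εl k') ⬝ᵥ w
      = star (prodVec n j εl k' x0) * w x0 + star (prodVec n j εl k' x1) * w x1 := by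
    intro w
    rw [dotProduct]
    exact Finset.sum_eq_add_of_mem x0 x1 (Finset.mem_univ _) (Finset.mem_univ _) hx01
      (fun y _ hy => by simp [hvz y hy.1 hy.2])
  have hstarεl : star εl = εl := by rcases hεl with h | h <;> rw [h] <;> simp
  have hstarc : star c = c := by rw [hc]; exact starc
  -- LHS
  have hstarΨ : ∀ x, star (Ψ x) = Ψ x := by
    intro x
    rcases hpsi x with h | h <;> rw [h] <;> simp [hstarc]
  have hΨsq : ∀ x, Ψ x * Ψ x = (2⁻¹ : ℂ) ^ n := by
    intro x
    have key : c ^ n * c ^ n = (2⁻¹ : ℂ) ^ n := by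
      rw [← mul_pow, hcc]
    rcases hpsi x with h | h <;> rw [h]
    · exact key
    · rw [neg_mul_neg]; exact key
  have hnorm : star Ψ ⬝ᵥ Ψ = 1 := by
    rw [dotProduct]
    have : ∑ x : Fin n → Fin 2, star Ψ x * Ψ x = ∑ _x : Fin n → Fin 2, (2⁻¹ : ℂ) ^ n :=
      Finset.sum_congr rfl (fun x _ => by rw [Pi.star_apply, hstarΨ, hΨsq])
    rw [this, Finset.sum_const, Finset.card_univ]
    have hcard : Fintype.card (Fin n → Fin 2) = 2 ^ n := by simp
    rw [hcard, nsmul_eq_mul]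
    push_cast
    rw [← mul_pow]
    norm_num
  have hLHS : star Ψ ⬝ᵥ S.mulVec Ψ = ε := by
    rw [heig, dotProduct_smul, hnorm, smul_eq_mul, mul_one]
  -- RHS
  have hux : u x1 = u x0 :=
    hu x1 x0 (fun i' hi' => by
      simp [hx0, hx1, Function.update_of_ne hi'])
  have hRHS : star (prodVec n j εl k') ⬝ᵥ S.mulVec (prodVec n j εl k') = εl * u x0 := by
    rw [hdot, hSmul, hSmul, hfl0, hfl1, hv0, hv1, star_mul', hstarεl, hstarc]
    have : c * (u x1 * (c * εl)) + c * εl * (u x0 * c) = (c * c) * (2 * (εl * u x0)) := by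
      rw [hux]; ring
    rw [this, hcc]; ring
  -- eigenvalue relation at x0
  have heig0 : u x0 * Ψ x1 = ε * Ψ x0 := by
    have h := congrFun heig x0
    rw [hSmul, hfl0, hux] at h
    simpa using h
  -- overlap forces Ψ x0 = εl * Ψ x1
  have hov : Ψ x0 = εl * Ψ x1 := by
    by_contra hne
    apply hoverlap
    rw [hdot Ψ, hv0, hv1, star_mul', hstarεl, hstarc]
    rcases hpsi x0 with h0 | h0 <;> rcases hpsi x1 with h1 | h1 <;>
      rcases hεl with he | he <;> rw [h0, h1, he] at hne ⊢ <;>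
      first
        | ring1
        | exact absurd (by ring) hne
  have hBne : Ψ x1 ≠ 0 := by
    have hcn : c ^ n ≠ 0 := pow_ne_zero n (hc ▸ cne)
    rcases hpsi x1 with h | h <;> rw [h] <;> simpa using hcn
  have hU : u x0 = ε * εl := by
    apply mul_right_cancel₀ hBne
    rw [heig0, hov]
    ring
  rw [hLHS, hRHS, hU]
  rcases hεl with he | he <;> rw [he] <;> ring

end
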